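/- Let g : ℝ → ℝ be continuous and odd, let m > 0 satisfy limsup_{s→0} g(s)/s = −m, and fix m' ∈ (0, m) and q > 2. Then the function s ↦ h̄(s)/s^{q−1} is non-decreasing on (0, +∞), and h̄(s)·s ≥ q·H̄(s) ≥ 0 for all s ∈ ℝ. -/

import Mathlib

open MeasureTheory Real Filter

/-- `h(s) = (m's + g(s))₊` for `s ≥ 0`, extended as an odd function for `s < 0`. -/
noncomputable def hfun (g : ℝ → ℝ) (m' : ℝ) (s : ℝ) : ℝ :=
  if 0 ≤ s then max (m' * s + g s) 0 else -max (m' * (-s) + g (-s)) 0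

/-- `h̄(s) = s^{q-1} sup_{0<t≤s} h(t)/t^{q-1}` for `s > 0`, `h̄(0)=0`,
extended as an odd function for `s < 0`. -/
noncomputable def hbar (g : ℝ → ℝ) (m' q : ℝ) (s : ℝ) : ℝ :=
  if 0 < s then s ^ (q - 1) * sSup ((fun t => hfun g m' t / t ^ (q - 1)) '' Set.Ioc 0 s)
  else if s < 0 then
    -((-s) ^ (q - 1) * sSup ((fun t => hfun g m' t / t ^ (q - 1)) '' Set.Ioc 0 (-s)))
  else 0

/-- `H(s) = ∫₀ˢ h(t) dt`. -/
noncomputable def Hfun (g : ℝ → ℝ) (m' : ℝ) (s : ℝ) : ℝ :=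
  ∫ t in (0 : ℝ)..s, hfun g m' t

/-- `H̄(s) = ∫₀ˢ h̄(t) dt`. -/
noncomputable def Hbar (g : ℝ → ℝ) (m' q : ℝ) (s : ℝ) : ℝ :=
  ∫ t in (0 : ℝ)..s, hbar g m' q t

section Aux

variable {g : ℝ → ℝ} {m' q : ℝ}

lemma hfun_of_nonneg {t : ℝ} (ht : 0 ≤ t) : hfun g m' t = max (m' * t + g t) 0 := if_pos ht

lemma hfun_nonneg {t : ℝ} (ht : 0 ≤ t) : 0 ≤ hfun g m' t := by
  rw [hfun_of_nonneg ht]; exact le_max_right _ _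

lemma hbar_of_pos {s : ℝ} (hs : 0 < s) :
    hbar g m' q s = s ^ (q - 1) * sSup ((fun t => hfun g m' t / t ^ (q - 1)) '' Set.Ioc 0 s) :=
  if_pos hs

lemma hbar_zero : hbar g m' q 0 = 0 := by simp [hbar]

lemma hbar_of_neg {s : ℝ} (hs : s < 0) : hbar g m' q s = -hbar g m' q (-s) := by
  rw [hbar, if_neg (by linarith), if_pos hs, hbar, if_pos (by linarith : (0:ℝ) < -s)]

lemma hbar_neg (s : ℝ) : hbar g m' q (-s) = -hbar g m' q s := by
  rcases lt_trichotomy s 0 with h | rfl | h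
  · rw [hbar_of_neg h, neg_neg]
  · simp [hbar_zero]
  · rw [hbar_of_neg (by linarith : -s < 0), neg_neg]

end Aux

theorem stmt_15 (g : ℝ → ℝ) (hg : Continuous g) (hodd : ∀ s, g (-s) = -g s)
    (m : ℝ) (hm : 0 < m)
    (hlim : Filter.limsup (fun s => g s / s) (nhdsWithin 0 {0}ᶜ) = -m)
    (m' q : ℝ) (hm' : m' ∈ Set.Ioo 0 m) (hq : 2 < q) :
    (∀ s₁ s₂ : ℝ, 0 < s₁ → s₁ ≤ s₂ →
        hbar g m' q s₁ / s₁ ^ (q - 1) ≤ hbar g m' q s₂ / s₂ ^ (q - 1)) ∧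
      ∀ s : ℝ, q * Hbar g m' q s ≤ hbar g m' q s * s ∧ 0 ≤ q * Hbar g m' q s := by
  obtain ⟨hm'0, hm'm⟩ := hm'
  have hq0 : (0 : ℝ) < q := by linarith
  -- Step 1: there is δ > 0 on which hfun vanishes
  obtain ⟨δ, hδ0, hδ⟩ : ∃ δ > 0, ∀ t : ℝ, 0 < t → t < δ → hfun g m' t = 0 := by
    set T : Set ℝ := {a | ∀ᶠ x in nhdsWithin 0 {0}ᶜ, g x / x ≤ a} with hT
    have hlim' : sInf T = -m := by rw [← hlim, Filter.limsup_eq]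
    have hTne : T.Nonempty := by
      by_contra h
      rw [Set.not_nonempty_iff_eq_empty] at h
      rw [h, Real.sInf_empty] at hlim'
      linarith
    obtain ⟨a, haT, ha⟩ := exists_lt_of_csInf_lt hTne
      (show sInf T < -m' by rw [hlim']; linarith)
    rw [hT, Set.mem_setOf_eq, eventually_nhdsWithin_iff, Metric.eventually_nhds_iff] at haT
    obtain ⟨δ, hδ0, hδ⟩ := haT
    refine ⟨δ, hδ0, fun t ht htδ => ?_⟩
    have h1 : g t / t ≤ a := by
      refine hδ ?_ (by simpa using ht.ne')
      simpa [Real.dist_eq, abs_of_pos ht] using htδ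
    have hgt : g t ≤ a * t := by rwa [div_le_iff₀ ht] at h1
    rw [hfun_of_nonneg ht.le, max_eq_right]
    nlinarith [mul_lt_mul_of_pos_right ha ht]
  set f : ℝ → ℝ := fun t => hfun g m' t / t ^ (q - 1) with hf
  have hf0 : ∀ t : ℝ, 0 < t → t < δ → f t = 0 := by
    intro t ht h; simp [hf, hδ t ht h]
  have hfnn : ∀ t : ℝ, 0 < t → 0 ≤ f t := fun t ht =>
    div_nonneg (hfun_nonneg ht.le) (Real.rpow_nonneg ht.le _)
  have hbdd : ∀ s : ℝ, BddAbove (f '' Set.Ioc 0 s) := by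
    intro s
    have hcont : ContinuousOn f (Set.Icc (δ / 2) s) := by
      have h1 : ContinuousOn (fun t : ℝ => max (m' * t + g t) 0) (Set.Icc (δ / 2) s) :=
        (Continuous.max (by continuity) continuous_const).continuousOn
      have h2 : ContinuousOn (fun t : ℝ => t ^ (q - 1)) (Set.Icc (δ / 2) s) := fun x hx =>
        (Real.continuousAt_rpow_const x (q - 1)
          (Or.inl (ne_of_gt (lt_of_lt_of_le (half_pos hδ0) hx.1)))).continuousWithinAt
      refine (h1.div h2 fun x hx =>
        ne_of_gt (Real.rpow_pos_of_pos (lt_of_lt_of_le (half_pos hδ0) hx.1) _)).congr ?_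
      intro x hx
      simp [hf, hfun_of_nonneg (le_of_lt (lt_of_lt_of_le (half_pos hδ0) hx.1))]
    obtain ⟨B, hB⟩ := (isCompact_Icc.image_of_continuousOn hcont).bddAbove
    refine ⟨max B 0, ?_⟩
    rintro x ⟨t, ⟨ht0, hts⟩, rfl⟩
    rcases lt_or_ge t (δ / 2) with h | h
    · rw [hf0 t ht0 (h.trans (by linarith))]
      exact le_max_right _ _
    · exact le_max_of_le_left (hB (Set.mem_image_of_mem f ⟨h, hts⟩))
  set S : ℝ → ℝ := fun s => sSup (f '' Set.Ioc 0 s) with hS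
  have hSnn : ∀ s : ℝ, 0 < s → 0 ≤ S s := fun s hs =>
    le_trans (hfnn s hs) (le_csSup (hbdd s) (Set.mem_image_of_mem f ⟨hs, le_refl s⟩))
  have hSmono : ∀ s₁ s₂ : ℝ, 0 < s₁ → s₁ ≤ s₂ → S s₁ ≤ S s₂ := fun s₁ s₂ h1 h12 =>
    csSup_le_csSup (hbdd s₂) ⟨f s₁, Set.mem_image_of_mem f ⟨h1, le_refl _⟩⟩
      (Set.image_mono (Set.Ioc_subset_Ioc_right h12))
  have hbar_eq : ∀ s : ℝ, 0 < s → hbar g m' q s = s ^ (q - 1) * S s := fun s hs =>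
    hbar_of_pos hs
  -- first conjunct
  have part1 : ∀ s₁ s₂ : ℝ, 0 < s₁ → s₁ ≤ s₂ →
      hbar g m' q s₁ / s₁ ^ (q - 1) ≤ hbar g m' q s₂ / s₂ ^ (q - 1) := by
    intro s₁ s₂ h1 h12
    have h2 : 0 < s₂ := h1.trans_le h12
    rw [hbar_eq s₁ h1, hbar_eq s₂ h2,
      mul_div_cancel_left₀ _ (ne_of_gt (Real.rpow_pos_of_pos h1 _)),
      mul_div_cancel_left₀ _ (ne_of_gt (Real.rpow_pos_of_pos h2 _))]
    exact hSmono s₁ s₂ h1 h12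
  -- hbar nonneg and monotone
  have hnn : ∀ a : ℝ, 0 ≤ a → 0 ≤ hbar g m' q a := by
    intro a ha
    rcases ha.eq_or_lt with rfl | h
    · rw [hbar_zero]
    · rw [hbar_eq a h]
      exact mul_nonneg (Real.rpow_nonneg h.le _) (hSnn a h)
  have hposmono : ∀ a b : ℝ, 0 < a → a ≤ b → hbar g m' q a ≤ hbar g m' q b := by
    intro a b ha hab
    rw [hbar_eq a ha, hbar_eq b (ha.trans_le hab)]
    exact mul_le_mul (Real.rpow_le_rpow ha.le hab (by linarith)) (hSmono a b ha hab)
      (hSnn a ha) (Real.rpow_nonneg (by linarith) _)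
  have hbmono : Monotone (hbar g m' q) := by
    intro a b hab
    rcases le_or_gt 0 a with ha | ha
    · rcases ha.eq_or_lt with rfl | h
      · rw [hbar_zero]; exact hnn b hab
      · exact hposmono a b h hab
    · rcases le_or_gt 0 b with hb | hb
      · have h1 : 0 ≤ hbar g m' q (-a) := hnn (-a) (by linarith)
        have h2 : 0 ≤ hbar g m' q b := hnn b hb
        rw [hbar_of_neg ha]; linarith
      · rw [hbar_of_neg ha, hbar_of_neg hb]
        have := hposmono (-b) (-a) (by linarith) (by linarith)
        linarith
  have hint : ∀ a b : ℝ, IntervalIntegrable (hbar g m' q) volume a b := fun a b =>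
    hbmono.intervalIntegrable
  have hHnn : ∀ s : ℝ, 0 ≤ s → 0 ≤ Hbar g m' q s := fun s hs =>
    intervalIntegral.integral_nonneg hs fun u hu => hnn u hu.1
  have hHe : ∀ s : ℝ, Hbar g m' q (-s) = Hbar g m' q s := by
    intro s
    have hodd' : ∀ t : ℝ, hbar g m' q t = -hbar g m' q (-t) := fun t => by
      rw [hbar_neg, neg_neg]
    unfold Hbar
    calc (∫ t in (0:ℝ)..(-s), hbar g m' q t)
        = ∫ t in (0:ℝ)..(-s), -hbar g m' q (-t) := by
          refine intervalIntegral.integral_congr fun t _ => hodd' t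
      _ = -∫ t in (0:ℝ)..(-s), hbar g m' q (-t) := intervalIntegral.integral_neg
      _ = -∫ t in (s:ℝ)..(0:ℝ), hbar g m' q t := by
          rw [intervalIntegral.integral_comp_neg (fun t => hbar g m' q t)]
          norm_num
      _ = ∫ t in (0:ℝ)..s, hbar g m' q t := (intervalIntegral.integral_symm _ _).symm
  -- core inequality for positive s
  have hcore : ∀ s : ℝ, 0 < s → q * Hbar g m' q s ≤ hbar g m' q s * s := by
    intro s hs
    have hq1 : (-1 : ℝ) < q - 1 := by linarith
    have hrint : IntervalIntegrable (fun t : ℝ => t ^ (q - 1) * S s) volume 0 s :=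
      (intervalIntegral.intervalIntegrable_rpow' hq1).mul_const _
    have hle : Hbar g m' q s ≤ ∫ t in (0:ℝ)..s, t ^ (q - 1) * S s := by
      refine intervalIntegral.integral_mono_on hs.le (hint 0 s) hrint ?_
      intro t ht
      rcases ht.1.eq_or_lt with rfl | h0
      · simp [hbar_zero, Real.zero_rpow (show q - 1 ≠ 0 by linarith)]
      · rw [hbar_eq t h0]
        exact mul_le_mul_of_nonneg_left (hSmono t s h0 ht.2) (Real.rpow_nonneg ht.1 _)
    have hcalc : (∫ t in (0:ℝ)..s, t ^ (q - 1) * S s) = s ^ q / q * S s := by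
      rw [intervalIntegral.integral_mul_const, integral_rpow (Or.inl hq1),
        Real.zero_rpow (show q - 1 + 1 ≠ 0 by linarith),
        show q - 1 + 1 = q by ring]
      ring
    have h1 : Hbar g m' q s ≤ s ^ q / q * S s := hcalc ▸ hle
    have hsq : s ^ q = s ^ (q - 1) * s := by
      conv_lhs => rw [show q = q - 1 + 1 by ring]
      rw [Real.rpow_add hs, Real.rpow_one]
    rw [hbar_eq s hs]
    calc q * Hbar g m' q s ≤ q * (s ^ q / q * S s) :=
          mul_le_mul_of_nonneg_left h1 hq0.le
      _ = s ^ q * S s := by field_simp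
      _ = s ^ (q - 1) * S s * s := by rw [hsq]; ring
  refine ⟨part1, fun s => ?_⟩
  rcases lt_trichotomy s 0 with h | rfl | h
  · have h' : 0 < -s := by linarith
    have hodd' : hbar g m' q s = -hbar g m' q (-s) := by rw [← hbar_neg, neg_neg]
    have hkey := hcore (-s) h'
    have heq : hbar g m' q (-s) * (-s) = -hbar g m' q (-s) * s := by ring
    constructor
    · rw [← hHe, hodd']
      linarith
    · rw [← hHe]
      exact mul_nonneg hq0.le (hHnn (-s) h'.le)
  · constructor <;> simp [Hbar, hbar_zero]
  · exact ⟨hcore s h, mul_nonneg hq0.le (hHnn s h.le)⟩
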